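/- Let L be a finite meet-distributive meet-semilattice. For each α ∈ L, the set S(α) = ℓ(α) \ ℓ(α') is an antichain in P, and |S(α)| = |N(α)|, the number of lower neighbors of α. -/

import Mathlib

open scoped Classical

/-- An element of a poset is *join-irreducible* if it covers exactly one element. -/
def JoinIrred {L : Type*} [Preorder L] (a : L) : Prop := ∃! b : L, b ⋖ a

/-- `ell α = {p ∈ P : p ≤ α}`, the set of join-irreducible elements below `α`. -/
def ell {L : Type*} [Preorder L] (a : L) : Set L := {p | JoinIrred p ∧ p ≤ a}

/-- The set of join-irreducible elements. -/
def Pset (L : Type*) [Preorder L] : Set L := {p | JoinIrred p}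

/-- The set `N(α)` of lower neighbors of `α`, as a finset. -/
noncomputable def NF {L : Type*} [Preorder L] [Fintype L] (a : L) : Finset L :=
  Finset.univ.filter (fun b => b ⋖ a)

/-- `ell` as a finset. -/
noncomputable def ellF {L : Type*} [Preorder L] [Fintype L] (a : L) : Finset L :=
  Finset.univ.filter (fun p => JoinIrred p ∧ p ≤ a)

/-- `α' = ⋀ N(α)`, the meet of all lower neighbors of `α` (with `α' = α` if `N(α) = ∅`). -/
noncomputable def lowMeet {L : Type*} [SemilatticeInf L] [Fintype L] (a : L) : L :=
  if h : (NF a).Nonempty then (NF a).inf' h id else a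

/-- `S(α) = ℓ(α) \ ℓ(α')`. -/
noncomputable def SF {L : Type*} [SemilatticeInf L] [Fintype L] (a : L) : Finset L :=
  ellF a \ ellF (lowMeet a)

/-- An interval `[γ, β]` is Boolean if it is order-isomorphic to some `2^[k]`. -/
def IsBooleanInterval {L : Type*} [Preorder L] (γ β : L) : Prop :=
  ∃ k : ℕ, Nonempty ((Set.Icc γ β) ≃o Set (Fin k))

/-- A poset is meet-distributive if each interval `[γ, β]` such that `γ` is the meet of
the lower neighbors of `β` in `[γ, β]` is Boolean. -/
def MeetDistributive (L : Type*) [Preorder L] : Prop :=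
  ∀ γ β : L, γ ≤ β → IsGLB {x | γ ≤ x ∧ x ⋖ β} γ → IsBooleanInterval γ β

/-- A pair `(A, B)` of subsets of `P` is independent if each `α` with `B ⊆ ℓ(α)`
satisfies `A ∩ ℓ(α) ≠ ∅`. -/
def Indep {L : Type*} [Preorder L] (A B : Set L) : Prop :=
  ∀ α : L, B ⊆ ell α → (A ∩ ell α).Nonempty

/-- `⟨B⟩`, the poset ideal of `P` generated by `B ⊆ P`. -/
def idealGen {L : Type*} [Preorder L] (B : Set L) : Set L :=
  {p | JoinIrred p ∧ ∃ q ∈ B, p ≤ q}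

/-- `M(B)`, the set of maximal elements of `B`. -/
def maxElems {L : Type*} [Preorder L] (B : Set L) : Set L :=
  {b ∈ B | ∀ c ∈ B, b ≤ c → c = b}

section MainAux
set_option linter.unusedSectionVars false
variable {L : Type*} [SemilatticeInf L] [Fintype L]

lemma mem_ellF {p a : L} : p ∈ ellF a ↔ JoinIrred p ∧ p ≤ a := by simp [ellF]

lemma ellF_mono {a b : L} (h : a ≤ b) : ellF a ⊆ ellF b := by
  intro p hp; rw [mem_ellF] at *; exact ⟨hp.1, hp.2.trans h⟩

lemma exists_covby {x y : L} (h : x < y) : ∃ b, x ≤ b ∧ b ⋖ y := by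
  obtain ⟨b, hbS, hmax⟩ := (Finset.univ.filter (fun z => x ≤ z ∧ z < y)).exists_maximal
    ⟨x, by simp [h]⟩
  simp only [Finset.mem_filter, Finset.mem_univ, true_and] at hbS hmax
  refine ⟨b, hbS.1, hbS.2, fun c hbc hcy => ?_⟩
  exact lt_irrefl _ (hbc.trans_le (hmax ⟨hbS.1.trans hbc.le, hcy⟩ hbc.le))

lemma sep : ∀ x y : L, ¬ x ≤ y → ∃ p, JoinIrred p ∧ p ≤ x ∧ ¬ p ≤ y := by
  intro x
  induction x using WellFoundedLT.induction with
  | _ x IH =>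
  intro y hxy
  have hlt : x ⊓ y < x :=
    lt_of_le_of_ne inf_le_left (fun he => hxy (he ▸ inf_le_right))
  by_cases hcov : ∃ b, b ⋖ x
  · by_cases hji : JoinIrred x
    · exact ⟨x, hji, le_rfl, hxy⟩
    · by_cases hall : ∀ b, b ⋖ x → b ≤ y
      · exfalso
        obtain ⟨b₀, hb₀⟩ := hcov
        have hb1 : ∃ b₁, b₁ ⋖ x ∧ b₁ ≠ b₀ := by
          by_contra hno
          push_neg at hno
          exact hji ⟨b₀, hb₀, fun b hb => hno b hb⟩
        obtain ⟨b₁, hb₁, hne⟩ := hb1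
        have key : ∀ b : L, b ⋖ x → b ≤ y → x ⊓ y = b := by
          intro b hb hby
          rcases (le_inf hb.le hby).lt_or_eq with h | h
          · exact absurd hlt (hb.2 h)
          · exact h.symm
        exact hne (key b₁ hb₁ (hall b₁ hb₁) ▸ key b₀ hb₀ (hall b₀ hb₀))
      · push_neg at hall
        obtain ⟨b, hb, hby⟩ := hall
        obtain ⟨p, hp, hpb, hpy⟩ := IH b hb.lt y hby
        exact ⟨p, hp, hpb.trans hb.le, hpy⟩
  · obtain ⟨b, _, hb⟩ := exists_covby hlt
    exact absurd ⟨b, hb⟩ hcov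

lemma covBy_coe {a b : L} {x y : Set.Icc a b} (hxy : x ⋖ y) : (x:L) ⋖ (y:L) := by
  refine ⟨Subtype.coe_lt_coe.2 hxy.lt, fun z hz hzy => ?_⟩
  have hzmem : z ∈ Set.Icc a b := ⟨x.2.1.trans hz.le, hzy.le.trans y.2.2⟩
  exact hxy.2 (c := ⟨z, hzmem⟩) (Subtype.coe_lt_coe.1 hz) (Subtype.coe_lt_coe.1 hzy)

lemma covBy_subtype {a b : L} {x y : Set.Icc a b} (hxy : (x:L) ⋖ (y:L)) : x ⋖ y :=
  ⟨Subtype.coe_lt_coe.1 hxy.lt, fun _ hc hcy =>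
    hxy.2 (Subtype.coe_lt_coe.2 hc) (Subtype.coe_lt_coe.2 hcy)⟩

lemma coatom_ncard {k : ℕ} {A : Set (Fin k)} (h : A ⋖ Set.univ) : A.ncard = k - 1 := by
  obtain ⟨i, -, hA⟩ := Set.covBy_iff_exists_sdiff_singleton.1 h
  rw [← hA, Set.ncard_diff_singleton_of_mem (Set.mem_univ i), Set.ncard_univ]
  simp

lemma key (hMD : MeetDistributive L) :
    ∀ α : L, ∀ β, β ⋖ α → (ellF α \ ellF β).card = 1 := by
  intro α
  induction α using WellFoundedLT.induction with
  | _ α IH =>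
  intro β hβ
  have hβN : β ∈ NF α := by simp [NF, hβ]
  have hNne : (NF α).Nonempty := ⟨β, hβN⟩
  set α' : L := (NF α).inf' hNne id with hα'def
  have hmem_NF : ∀ {x : L}, x ∈ NF α ↔ x ⋖ α := by
    intro x; simp [NF]
  have hα'le : ∀ x ∈ NF α, α' ≤ x := fun x hx => Finset.inf'_le id hx
  have hα'β : α' ≤ β := hα'le β hβN
  have hle : α' ≤ α := hα'β.trans hβ.le
  have hglb : IsGLB {x | α' ≤ x ∧ x ⋖ α} α' := by
    constructor
    · intro x hx; exact hx.1
    · intro c hc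
      apply Finset.le_inf'
      intro b hb
      exact hc ⟨hα'le b hb, hmem_NF.1 hb⟩
  obtain ⟨k, ⟨e⟩⟩ := hMD α' α hle hglb
  have hmemIcc : ∀ {x : L}, x ⋖ α → x ∈ Set.Icc α' α :=
    fun hx => ⟨hα'le _ (hmem_NF.2 hx), hx.le⟩
  set αt : Set.Icc α' α := ⟨α, hle, le_rfl⟩ with hαt
  set αb : Set.Icc α' α := ⟨α', le_rfl, hle⟩ with hαb
  have he_bot : e αb = ∅ := by
    have h1 : e αb ≤ e (e.symm ∅) := e.monotone (e.symm ∅).2.1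
    rw [e.apply_symm_apply] at h1
    exact le_bot_iff.1 h1
  have he_top : e αt = Set.univ := by
    have h1 : e (e.symm Set.univ) ≤ e αt := e.monotone (e.symm Set.univ).2.2
    rw [e.apply_symm_apply] at h1
    exact top_le_iff.1 h1
  -- chain cardinality formula
  have card2 : ∀ n : ℕ, ∀ x : Set.Icc α' α, (e x).ncard = n → (x:L) < α →
      (ellF (x:L) \ ellF α').card = n := by
    intro n
    induction n with
    | zero =>
      intro x hx _
      have hxe : e x = ∅ := (Set.ncard_eq_zero (Set.toFinite _)).mp hx
      have hxb : x = αb := e.injective (by rw [hxe, he_bot])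
      have : (x : L) = α' := by rw [hxb]
      rw [this, Finset.sdiff_self, Finset.card_empty]
    | succ n ih =>
      intro x hx hxα
      have hne : (e x).Nonempty := by
        rw [← Set.ncard_pos (Set.toFinite _), hx]; omega
      obtain ⟨i, hi⟩ := hne
      set y : Set.Icc α' α := e.symm (e x \ {i}) with hy
      have hey : e y = e x \ {i} := e.apply_symm_apply _
      have hyx : y ⋖ x := (apply_covBy_apply_iff e).1
        (by rw [hey]; exact Set.sdiff_singleton_covBy hi)
      have hyxL : (y:L) ⋖ (x:L) := covBy_coe hyx
      have hyα : (y:L) < α := hyxL.lt.trans_le hxα.le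
      have h1 : (ellF (x:L) \ ellF (y:L)).card = 1 := IH (x:L) hxα (y:L) hyxL
      have h2 : (ellF (y:L) \ ellF α').card = n := by
        apply ih y _ hyα
        rw [hey, Set.ncard_diff_singleton_of_mem hi, hx]
        omega
      have hsub1 : ellF α' ⊆ ellF (y:L) := ellF_mono y.2.1
      have hsub2 : ellF (y:L) ⊆ ellF (x:L) := ellF_mono hyxL.le
      have e1 := Finset.card_sdiff_of_subset (hsub1.trans hsub2)
      have e2 := Finset.card_sdiff_of_subset hsub1
      have e3 := Finset.card_sdiff_of_subset hsub2
      have l1 := Finset.card_le_card hsub1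
      have l2 := Finset.card_le_card hsub2
      omega
  set βi : Set.Icc α' α := ⟨β, hmemIcc hβ⟩ with hβi
  have hβcovt : e βi ⋖ e αt := (apply_covBy_apply_iff e).2 (covBy_subtype hβ)
  have hβcard : (e βi).ncard = k - 1 := coatom_ncard (he_top ▸ hβcovt)
  have hk1 : 1 ≤ k := by
    rcases Nat.eq_zero_or_pos k with h0 | h
    · exfalso
      subst h0
      have huniv : (Set.univ : Set (Fin 0)) = ∅ := by ext i; exact i.elim0
      have hbt : αb = αt := e.injective (by rw [he_bot, he_top, huniv])
      have h' : α' = α := congrArg Subtype.val hbt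
      exact lt_irrefl β (hβ.lt.trans_le (h' ▸ hα'β))
    · exact h
  rcases eq_or_lt_of_le hk1 with hk1' | hk2
  · -- k = 1 case
    have hcovuniq : ∀ b, b ⋖ α → b = α' := by
      intro b hb
      set bi : Set.Icc α' α := ⟨b, hmemIcc hb⟩ with hbi
      have hcov : e bi ⋖ e αt := (apply_covBy_apply_iff e).2 (covBy_subtype hb)
      have hc : (e bi).ncard = 0 := by
        have := coatom_ncard (he_top ▸ hcov); omega
      have : bi = αb := e.injective (by
        rw [(Set.ncard_eq_zero (Set.toFinite _)).mp hc, he_bot])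
      exact congrArg Subtype.val this
    have hβα' : β = α' := hcovuniq β hβ
    have hαji : JoinIrred α :=
      ⟨β, hβ, fun b hb => (hcovuniq b hb).trans hβα'.symm⟩
    have hsing : ellF α \ ellF β = {α} := by
      apply Finset.eq_singleton_iff_unique_mem.2
      constructor
      · rw [Finset.mem_sdiff, mem_ellF, mem_ellF]
        exact ⟨⟨hαji, le_rfl⟩, fun hc => hβ.lt.not_ge hc.2⟩
      · intro p hp
        rw [Finset.mem_sdiff, mem_ellF, mem_ellF] at hp
        obtain ⟨⟨hpj, hpα⟩, hp2⟩ := hp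
        rcases hpα.lt_or_eq with hl | hl
        · obtain ⟨b, hpb, hbcov⟩ := exists_covby hl
          exact absurd ⟨hpj, (hcovuniq b hbcov ▸ hpb).trans hα'β⟩ hp2
        · exact hl
    rw [hsing, Finset.card_singleton]
  · -- k ≥ 2 case
    have hk0 : 0 < k := by omega
    -- s ≤ k via injection into Fin k
    have main : ∀ p ∈ ellF α \ ellF α', ∃ i : Fin k, ∃ m : Set.Icc α' α,
        e m = {i} ∧ JoinIrred p ∧ p ≤ (m:L) ∧ (m:L) < α := by
      intro p hp
      rw [Finset.mem_sdiff, mem_ellF, mem_ellF] at hp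
      obtain ⟨⟨hpj, hpα⟩, hp2⟩ := hp
      have hpα' : ¬ p ≤ α' := fun hc => hp2 ⟨hpj, hc⟩
      have hplt : p < α := by
        rcases hpα.lt_or_eq with hl | hl
        · exact hl
        · exfalso
          have hαji : JoinIrred α := hl ▸ hpj
          obtain ⟨i₀, -, hi₀⟩ := Set.covBy_iff_exists_sdiff_singleton.1 (he_top ▸ hβcovt)
          obtain ⟨j, hj⟩ := Fintype.exists_ne_of_one_lt_card (by simpa using hk2) i₀
          set γi : Set.Icc α' α := e.symm (Set.univ \ {j}) with hγi
          have heγ : e γi = Set.univ \ {j} := e.apply_symm_apply _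
          have hγcov : γi ⋖ αt := (apply_covBy_apply_iff e).1 (by
            rw [heγ, he_top]
            exact Set.sdiff_singleton_covBy (Set.mem_univ j))
          have hγL : (γi:L) ⋖ α := covBy_coe hγcov
          have hγβ : (γi:L) = β := hαji.unique hγL hβ
          have hγβi : γi = βi := Subtype.ext hγβ
          rw [hγβi, ← hi₀] at heγ
          have hmem : i₀ ∈ Set.univ \ {j} :=
            ⟨Set.mem_univ _, by simp; exact fun h' => hj h'.symm⟩
          rw [← heγ] at hmem
          simp at hmem
      obtain ⟨z, hpz, hzα⟩ := exists_covby hplt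
      obtain ⟨m, hmM, hmmin⟩ :=
        (Finset.univ.filter (fun x : L => α' ≤ x ∧ p ≤ x ∧ x < α)).exists_minimal
          ⟨z, by simp [hα'le z (hmem_NF.2 hzα), hpz, hzα.lt]⟩
      simp only [Finset.mem_filter, Finset.mem_univ, true_and] at hmM hmmin
      obtain ⟨hmα', hpm, hmα⟩ := hmM
      set mi : Set.Icc α' α := ⟨m, hmα', hmα.le⟩ with hmi
      have hne0 : (e mi).ncard ≠ 0 := by
        intro hc
        have hmb : mi = αb := e.injective (by
          rw [(Set.ncard_eq_zero (Set.toFinite _)).mp hc, he_bot])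
        have hm' : m = α' := congrArg Subtype.val hmb
        exact hpα' (hm' ▸ hpm)
      have hcard1 : (e mi).ncard = 1 := by
        by_contra hn1
        have h2le : 2 ≤ (e mi).ncard := by omega
        obtain ⟨i, j, hi, hj, hij⟩ :=
          (Set.one_lt_ncard_iff (s := e mi) (Set.toFinite _)).1 (by omega)
        set y₁ : Set.Icc α' α := e.symm (e mi \ {i}) with hy₁
        set y₂ : Set.Icc α' α := e.symm (e mi \ {j}) with hy₂
        have hey₁ : e y₁ = e mi \ {i} := e.apply_symm_apply _
        have hey₂ : e y₂ = e mi \ {j} := e.apply_symm_apply _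
        have hcov₁ : y₁ ⋖ mi := (apply_covBy_apply_iff e).1
          (by rw [hey₁]; exact Set.sdiff_singleton_covBy hi)
        have hcov₂ : y₂ ⋖ mi := (apply_covBy_apply_iff e).1
          (by rw [hey₂]; exact Set.sdiff_singleton_covBy hj)
        have hcovL₁ : (y₁:L) ⋖ m := covBy_coe hcov₁
        have hcovL₂ : (y₂:L) ⋖ m := covBy_coe hcov₂
        have hy₁α : (y₁:L) < α := hcovL₁.lt.trans hmα
        have hy₂α : (y₂:L) < α := hcovL₂.lt.trans hmα
        have hpy₁ : ¬ p ≤ (y₁:L) := fun hple =>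
          hcovL₁.lt.not_ge (hmmin ⟨y₁.2.1, hple, hy₁α⟩ hcovL₁.le)
        have hpy₂ : ¬ p ≤ (y₂:L) := fun hple =>
          hcovL₂.lt.not_ge (hmmin ⟨y₂.2.1, hple, hy₂α⟩ hcovL₂.le)
        set c : L := (y₁:L) ⊓ (y₂:L) with hc
        have hcIcc : c ∈ Set.Icc α' α := ⟨le_inf y₁.2.1 y₂.2.1, inf_le_left.trans y₁.2.2⟩
        set ci : Set.Icc α' α := ⟨c, hcIcc⟩ with hci
        have hec : e ci = e y₁ ∩ e y₂ := by
          apply le_antisymm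
          · exact Set.subset_inter (e.monotone inf_le_left) (e.monotone inf_le_right)
          · have h1 : e.symm (e y₁ ∩ e y₂) ≤ y₁ := by
              have := e.symm.monotone (Set.inter_subset_left (s := e y₁) (t := e y₂))
              rwa [e.symm_apply_apply] at this
            have h2 : e.symm (e y₁ ∩ e y₂) ≤ y₂ := by
              have := e.symm.monotone (Set.inter_subset_right (s := e y₁) (t := e y₂))
              rwa [e.symm_apply_apply] at this
            have h3 : e.symm (e y₁ ∩ e y₂) ≤ ci :=
              Subtype.coe_le_coe.1 (le_inf h1 h2)
            have := e.monotone h3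
            rwa [e.apply_symm_apply] at this
        have hecval : e ci = e mi \ {i, j} := by
          rw [hec, hey₁, hey₂]
          ext x
          simp only [Set.mem_inter_iff, Set.mem_diff, Set.mem_singleton_iff,
            Set.mem_insert_iff]
          tauto
        have hncy₁ : (e y₁).ncard = (e mi).ncard - 1 := by
          rw [hey₁, Set.ncard_diff_singleton_of_mem hi]
        have hncy₂ : (e y₂).ncard = (e mi).ncard - 1 := by
          rw [hey₂, Set.ncard_diff_singleton_of_mem hj]
        have hncc : (e ci).ncard = (e mi).ncard - 2 := by
          rw [hecval]
          have hsplit : e mi \ {i, j} = (e mi \ {i}) \ {j} := by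
            rw [Set.diff_diff, Set.singleton_union]
          have hjmem : j ∈ e mi \ {i} := ⟨hj, by simpa using hij.symm⟩
          rw [hsplit, Set.ncard_diff_singleton_of_mem hjmem,
            Set.ncard_diff_singleton_of_mem hi]
          omega
        have hcα : c < α := inf_le_left.trans_lt hy₁α
        have cm := card2 _ mi rfl hmα
        have cy₁ := card2 _ y₁ rfl hy₁α
        have cy₂ := card2 _ y₂ rfl hy₂α
        have cc := card2 _ ci rfl hcα
        have hs₁ : ellF α' ⊆ ellF c := ellF_mono hcIcc.1
        have hsc₁ : ellF c ⊆ ellF (y₁:L) := ellF_mono inf_le_left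
        have hsc₂ : ellF c ⊆ ellF (y₂:L) := ellF_mono inf_le_right
        have hsy₁ : ellF (y₁:L) ⊆ ellF m := ellF_mono hcovL₁.le
        have hsy₂ : ellF (y₂:L) ⊆ ellF m := ellF_mono hcovL₂.le
        -- derive singleton facts
        have d1 : (ellF m \ ellF (y₁:L)).card = 1 := by
          have e1 := Finset.card_sdiff_of_subset (hs₁.trans (hsc₁.trans hsy₁))
          have e2 := Finset.card_sdiff_of_subset (hs₁.trans hsc₁)
          have e3 := Finset.card_sdiff_of_subset hsy₁
          have l1 := Finset.card_le_card (hs₁.trans hsc₁)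
          have l2 := Finset.card_le_card hsy₁
          rw [cm] at e1
          rw [cy₁] at e2
          omega
        have d2 : (ellF m \ ellF (y₂:L)).card = 1 := by
          have e1 := Finset.card_sdiff_of_subset (hs₁.trans (hsc₂.trans hsy₂))
          have e2 := Finset.card_sdiff_of_subset (hs₁.trans hsc₂)
          have e3 := Finset.card_sdiff_of_subset hsy₂
          have l1 := Finset.card_le_card (hs₁.trans hsc₂)
          have l2 := Finset.card_le_card hsy₂
          rw [cm] at e1
          rw [cy₂] at e2
          omega
        have dcc : (ellF m \ ellF c).card = 2 := by
          have e1 := Finset.card_sdiff_of_subset (hs₁.trans (hsc₁.trans hsy₁))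
          have e2 := Finset.card_sdiff_of_subset hs₁
          have e3 := Finset.card_sdiff_of_subset (hsc₁.trans hsy₁)
          have l1 := Finset.card_le_card hs₁
          have l2 := Finset.card_le_card (hsc₁.trans hsy₁)
          rw [cm] at e1
          rw [cc] at e2
          omega
        have hp₁ : p ∈ ellF m \ ellF (y₁:L) := by
          rw [Finset.mem_sdiff, mem_ellF, mem_ellF]
          exact ⟨⟨hpj, hpm⟩, fun hc' => hpy₁ hc'.2⟩
        have hp₂ : p ∈ ellF m \ ellF (y₂:L) := by
          rw [Finset.mem_sdiff, mem_ellF, mem_ellF]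
          exact ⟨⟨hpj, hpm⟩, fun hc' => hpy₂ hc'.2⟩
        obtain ⟨a₁, ha₁⟩ := Finset.card_eq_one.1 d1
        obtain ⟨a₂, ha₂⟩ := Finset.card_eq_one.1 d2
        rw [ha₁, Finset.mem_singleton] at hp₁
        rw [ha₂, Finset.mem_singleton] at hp₂
        have hsubp : ellF m \ ellF c ⊆ {p} := by
          intro q hq
          rw [Finset.mem_sdiff, mem_ellF, mem_ellF] at hq
          obtain ⟨⟨hqj, hqm⟩, hq2⟩ := hq
          have : ¬ q ≤ (y₁:L) ∨ ¬ q ≤ (y₂:L) := by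
            by_contra hno
            push_neg at hno
            exact hq2 ⟨hqj, le_inf hno.1 hno.2⟩
          rcases this with hq' | hq'
          · have : q ∈ ellF m \ ellF (y₁:L) := by
              rw [Finset.mem_sdiff, mem_ellF, mem_ellF]
              exact ⟨⟨hqj, hqm⟩, fun hc' => hq' hc'.2⟩
            rw [ha₁, Finset.mem_singleton] at this
            simp [this, hp₁]
          · have : q ∈ ellF m \ ellF (y₂:L) := by
              rw [Finset.mem_sdiff, mem_ellF, mem_ellF]
              exact ⟨⟨hqj, hqm⟩, fun hc' => hq' hc'.2⟩
            rw [ha₂, Finset.mem_singleton] at this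
            simp [this, hp₂]
        have := Finset.card_le_card hsubp
        rw [dcc, Finset.card_singleton] at this
        omega
      obtain ⟨i, hi⟩ := Set.ncard_eq_one.1 hcard1
      exact ⟨i, mi, hi, hpj, hpm, hmα⟩
    -- build the injection
    have hs_le : (ellF α \ ellF α').card ≤ k := by
      classical
      have hchoice : ∀ p : L, p ∈ ellF α \ ellF α' → ∃ i : Fin k, ∃ m : Set.Icc α' α,
          e m = {i} ∧ JoinIrred p ∧ p ≤ (m:L) ∧ (m:L) < α := main
      choose f m hf hj' hpm' hmα' using hchoice
      have hcle : (ellF α \ ellF α').card ≤ (Finset.univ : Finset (Fin k)).card := by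
        apply Finset.card_le_card_of_injOn
          (fun p => if h : p ∈ ellF α \ ellF α' then f p h else ⟨0, hk0⟩)
          (fun _ _ => Finset.mem_univ _)
        intro p hp q hq hfpq
        simp only [Finset.mem_coe] at hp hq
        simp only [dif_pos hp, dif_pos hq] at hfpq
        have hmpq : m p hp = m q hq := e.injective (by rw [hf p hp, hf q hq, hfpq])
        set mm := m p hp with hmm
        have hcard := card2 1 mm (by rw [hf p hp]; exact Set.ncard_singleton _) (hmα' p hp)
        have hpmem : p ∈ ellF (mm:L) \ ellF α' := by
          rw [Finset.mem_sdiff, mem_ellF]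
          refine ⟨⟨hj' p hp, hpm' p hp⟩, ?_⟩
          rw [Finset.mem_sdiff] at hp
          exact hp.2
        have hqmem : q ∈ ellF (mm:L) \ ellF α' := by
          rw [Finset.mem_sdiff, mem_ellF]
          refine ⟨⟨hj' q hq, hmpq ▸ hpm' q hq⟩, ?_⟩
          rw [Finset.mem_sdiff] at hq
          exact hq.2
        obtain ⟨a, ha⟩ := Finset.card_eq_one.1 hcard
        rw [ha, Finset.mem_singleton] at hpmem hqmem
        rw [hpmem, hqmem]
      simpa using hcle
    -- final count
    have hsub1 : ellF α' ⊆ ellF β := ellF_mono hα'β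
    have hsub2 : ellF β ⊆ ellF α := ellF_mono hβ.le
    have hβc : (ellF β \ ellF α').card = k - 1 := card2 _ βi hβcard hβ.lt
    have hr1 : 1 ≤ (ellF α \ ellF β).card := by
      obtain ⟨p, hpj, hpα, hpβ⟩ := sep α β hβ.lt.not_ge
      apply Finset.card_pos.2
      exact ⟨p, by rw [Finset.mem_sdiff, mem_ellF, mem_ellF]; exact ⟨⟨hpj, hpα⟩, fun hc => hpβ hc.2⟩⟩
    have e1 := Finset.card_sdiff_of_subset (hsub1.trans hsub2)
    have e2 := Finset.card_sdiff_of_subset hsub1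
    have e3 := Finset.card_sdiff_of_subset hsub2
    have l1 := Finset.card_le_card hsub1
    have l2 := Finset.card_le_card hsub2
    rw [hβc] at e2
    omega
end MainAux

/-- `S(α)` is an antichain in `P` and `|S(α)| = |N(α)|`. -/
theorem S_antichain_card {L : Type*} [SemilatticeInf L] [Fintype L]
    (h : MeetDistributive L) (α : L) :
    IsAntichain (· ≤ ·) (↑(SF α) : Set L) ∧ (SF α).card = (NF α).card := by
  classical
  by_cases hN : (NF α).Nonempty
  · have hlm : lowMeet α = (NF α).inf' hN id := dif_pos hN
    have hNFcov : ∀ {b : L}, b ∈ NF α ↔ b ⋖ α := by intro b; simp [NF]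
    have hα'le : ∀ b ∈ NF α, lowMeet α ≤ b := by
      intro b hb; rw [hlm]; exact Finset.inf'_le id hb
    have hkey : ∀ b ∈ NF α, (ellF α \ ellF b).card = 1 :=
      fun b hb => key h α b (hNFcov.1 hb)
    have huniq : ∀ b ∈ NF α, ∃ p, ellF α \ ellF b = {p} :=
      fun b hb => Finset.card_eq_one.1 (hkey b hb)
    choose g hg using huniq
    have hgmem : ∀ b (hb : b ∈ NF α), g b hb ∈ ellF α \ ellF b := by
      intro b hb; rw [hg b hb]; exact Finset.mem_singleton_self _
    have hmemSF : ∀ p : L, p ∈ SF α ↔ JoinIrred p ∧ p ≤ α ∧ ¬ p ≤ lowMeet α := by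
      intro p
      rw [SF, Finset.mem_sdiff, mem_ellF, mem_ellF]
      tauto
    have hmiss : ∀ p ∈ SF α, ∃ b ∈ NF α, ¬ p ≤ b := by
      intro p hp
      rw [hmemSF] at hp
      by_contra hno
      push_neg at hno
      exact hp.2.2 (by rw [hlm]; exact Finset.le_inf' hN id hno)
    constructor
    · intro p hp q hq hne hle
      rw [Finset.mem_coe, hmemSF] at hp hq
      obtain ⟨b, hbN, hpb⟩ := hmiss p (by rw [hmemSF]; exact hp)
      by_cases hqb : q ≤ b
      · exact hpb (hle.trans hqb)
      · have hp1 : p ∈ ellF α \ ellF b := by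
          rw [Finset.mem_sdiff, mem_ellF, mem_ellF]
          exact ⟨⟨hp.1, hp.2.1⟩, fun hc => hpb hc.2⟩
        have hq1 : q ∈ ellF α \ ellF b := by
          rw [Finset.mem_sdiff, mem_ellF, mem_ellF]
          exact ⟨⟨hq.1, hq.2.1⟩, fun hc => hqb hc.2⟩
        rw [hg b hbN, Finset.mem_singleton] at hp1 hq1
        exact hne (hp1.trans hq1.symm)
    · refine (Finset.card_bij (fun b hb => g b hb) ?_ ?_ ?_).symm
      · intro b hb
        have := hgmem b hb
        rw [Finset.mem_sdiff, mem_ellF, mem_ellF] at this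
        rw [hmemSF]
        exact ⟨this.1.1, this.1.2, fun hc => this.2 ⟨this.1.1, hc.trans (hα'le b hb)⟩⟩
      · intro b₁ hb₁ b₂ hb₂ hgg
        have hdir : ∀ (b₁ : L) (hb₁ : b₁ ∈ NF α) (b₂ : L) (hb₂ : b₂ ∈ NF α),
            g b₁ hb₁ = g b₂ hb₂ → b₁ ≤ b₂ := by
          intro b₁ hb₁ b₂ hb₂ hgg
          by_contra hn
          obtain ⟨q, hqj, hqb₁, hqb₂⟩ := sep b₁ b₂ hn
          have hq1 : q ∈ ellF α \ ellF b₂ := by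
            rw [Finset.mem_sdiff, mem_ellF, mem_ellF]
            exact ⟨⟨hqj, hqb₁.trans (hNFcov.1 hb₁).le⟩, fun hc => hqb₂ hc.2⟩
          rw [hg b₂ hb₂, Finset.mem_singleton] at hq1
          have hp1 := hgmem b₁ hb₁
          rw [Finset.mem_sdiff, mem_ellF, mem_ellF] at hp1
          exact hp1.2 ⟨hp1.1.1, by rw [hgg, ← hq1]; exact hqb₁⟩
        exact le_antisymm (hdir b₁ hb₁ b₂ hb₂ hgg) (hdir b₂ hb₂ b₁ hb₁ hgg.symm)
      · intro p hp
        obtain ⟨b, hbN, hpb⟩ := hmiss p hp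
        rw [hmemSF] at hp
        have hp1 : p ∈ ellF α \ ellF b := by
          rw [Finset.mem_sdiff, mem_ellF, mem_ellF]
          exact ⟨⟨hp.1, hp.2.1⟩, fun hc => hpb hc.2⟩
        rw [hg b hbN, Finset.mem_singleton] at hp1
        exact ⟨b, hbN, hp1.symm⟩
  · have hNe : NF α = ∅ := Finset.not_nonempty_iff_eq_empty.1 hN
    have hlm : lowMeet α = α := dif_neg hN
    have hSF : SF α = ∅ := by rw [SF, hlm, Finset.sdiff_self]
    rw [hSF, hNe]
    exact ⟨by simp [IsAntichain], rfl⟩
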